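/- For every natural number k, h(k) ≥ (2 + √2)^k · (2 − √2), as real numbers. -/

import Mathlib

/-- `hcomp k` is the sum over all compositions `c` of `k` of `∏_{p ∈ c.blocks} (p + 1)`;
in particular `hcomp 0 = 1`. -/
def hcomp (k : ℕ) : ℕ := ∑ c : Composition k, (c.blocks.map (· + 1)).prod

namespace Stmt15Aux

instance : Unique (Composition 0) where
  default := ⟨[], by simp, by simp⟩
  uniq c := by
    have h : c.blocks = [] := by
      cases hb : c.blocks with
      | nil => rfl
      | cons a l =>
        have h1 := c.blocks_pos (hb ▸ (List.mem_cons_self : a ∈ a :: l))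
        have h2 := c.blocks_sum
        rw [hb] at h2
        simp at h2
        omega
    exact Composition.ext h

lemma hcomp_zero : hcomp 0 = 1 := by
  rw [hcomp, Finset.univ_unique, Finset.sum_singleton]
  rfl

/-- prepend a block of size `j+1` to a composition of `n - j`. -/
def prepend (n : ℕ) (j : Fin (n + 1)) (c : Composition (n - (j : ℕ))) :
    Composition (n + 1) where
  blocks := ((j : ℕ) + 1) :: c.blocks
  blocks_pos := by
    intro i hi
    rcases List.mem_cons.1 hi with h | h
    · omega
    · exact c.blocks_pos h
  blocks_sum := by
    have h1 := c.blocks_sum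
    have hj : (j : ℕ) ≤ n := Nat.lt_succ_iff.mp j.isLt
    simp [h1]
    omega

lemma key (n : ℕ) :
    ∑ j ∈ Finset.range (n + 1), (j + 2) * hcomp (n - j) ≤ hcomp (n + 1) := by
  classical
  have hw : ∀ (j : Fin (n + 1)) (c : Composition (n - (j : ℕ))),
      ((prepend n j c).blocks.map (· + 1)).prod
        = ((j : ℕ) + 2) * (c.blocks.map (· + 1)).prod := by
    intro j c
    simp [prepend]
  have hinj : Function.Injective
      (fun x : Σ j : Fin (n + 1), Composition (n - (j : ℕ)) => prepend n x.1 x.2) := by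
    rintro ⟨j, c⟩ ⟨j', c'⟩ h
    have hb : ((j : ℕ) + 1) :: c.blocks = ((j' : ℕ) + 1) :: c'.blocks :=
      congrArg Composition.blocks h
    obtain ⟨h1, h2⟩ := List.cons_eq_cons.mp hb
    have hj : j = j' := Fin.ext (by omega)
    subst hj
    have hc : c = c' := Composition.ext h2
    rw [hc]
  calc ∑ j ∈ Finset.range (n + 1), (j + 2) * hcomp (n - j)
      = ∑ j : Fin (n + 1), ((j : ℕ) + 2) * hcomp (n - (j : ℕ)) :=
        (Fin.sum_univ_eq_sum_range (fun j => (j + 2) * hcomp (n - j)) (n + 1)).symm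
    _ = ∑ x : Σ j : Fin (n + 1), Composition (n - (j : ℕ)),
          ((prepend n x.1 x.2).blocks.map (· + 1)).prod := by
        rw [← Finset.univ_sigma_univ, Finset.sum_sigma]
        refine Finset.sum_congr rfl fun j _ => ?_
        rw [hcomp, Finset.mul_sum]
        exact Finset.sum_congr rfl fun c _ => (hw j c).symm
    _ = ∑ c ∈ Finset.univ.image
          (fun x : Σ j : Fin (n + 1), Composition (n - (j : ℕ)) => prepend n x.1 x.2),
          (c.blocks.map (· + 1)).prod := by
        rw [Finset.sum_image (fun a _ b _ h => hinj h)]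
    _ ≤ ∑ c : Composition (n + 1), (c.blocks.map (· + 1)).prod :=
        Finset.sum_le_sum_of_subset (Finset.subset_univ _)
    _ = hcomp (n + 1) := rfl

lemma Gsum (n : ℕ) :
    ∑ j ∈ Finset.range (n + 1), ((j : ℝ) + 2) * (2 + Real.sqrt 2) ^ (n - j)
      = (2 + Real.sqrt 2) ^ (n + 1) + (1 - Real.sqrt 2) * n - Real.sqrt 2 := by
  have h2 : Real.sqrt 2 * Real.sqrt 2 = 2 := Real.mul_self_sqrt (by norm_num)
  induction n with
  | zero => simp
  | succ n ih =>
    rw [Finset.sum_range_succ]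
    have hstep : ∀ j ∈ Finset.range (n + 1),
        ((j : ℝ) + 2) * (2 + Real.sqrt 2) ^ (n + 1 - j)
          = (2 + Real.sqrt 2) * (((j : ℝ) + 2) * (2 + Real.sqrt 2) ^ (n - j)) := by
      intro j hj
      have hjn : j ≤ n := Nat.lt_succ_iff.mp (Finset.mem_range.mp hj)
      have : n + 1 - j = (n - j) + 1 := by omega
      rw [this, pow_succ]
      ring
    rw [Finset.sum_congr rfl hstep, ← Finset.mul_sum, ih]
    have : n + 1 - (n + 1) = 0 := by omega
    rw [this]
    push_cast
    ring_nf
    linear_combination (-(n : ℝ) - 1) * h2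

end Stmt15Aux

/-- For every natural number `k`, `hcomp k ≥ (2 + √2)^k · (2 − √2)`. -/
theorem stmt_15 (k : ℕ) :
    (hcomp k : ℝ) ≥ (2 + Real.sqrt 2) ^ k * (2 - Real.sqrt 2) := by
  have h2 : Real.sqrt 2 * Real.sqrt 2 = 2 := Real.mul_self_sqrt (by norm_num)
  have ha : (0 : ℝ) ≤ Real.sqrt 2 := Real.sqrt_nonneg 2
  induction k using Nat.strong_induction_on with
  | _ k ih =>
    match k with
    | 0 =>
      rw [Stmt15Aux.hcomp_zero]
      push_cast
      nlinarith
    | (n + 1) =>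
      have hkey := Stmt15Aux.key n
      have hcast : (∑ j ∈ Finset.range (n + 1), ((j : ℝ) + 2) * (hcomp (n - j) : ℝ))
          ≤ (hcomp (n + 1) : ℝ) := by
        exact_mod_cast hkey
      rw [Finset.sum_range_succ] at hcast
      have hlast : ((n : ℝ) + 2) * (hcomp (n - n) : ℝ) = (n : ℝ) + 2 := by
        simp [Stmt15Aux.hcomp_zero]
      rw [hlast] at hcast
      have hterm : ∑ j ∈ Finset.range n, ((j : ℝ) + 2) * ((2 + Real.sqrt 2) ^ (n - j) * (2 - Real.sqrt 2))
          ≤ ∑ j ∈ Finset.range n, ((j : ℝ) + 2) * (hcomp (n - j) : ℝ) := by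
        refine Finset.sum_le_sum fun j hj => ?_
        have hjn : j < n := Finset.mem_range.mp hj
        have := ih (n - j) (by omega)
        exact mul_le_mul_of_nonneg_left this (by positivity)
      have hG := Stmt15Aux.Gsum n
      rw [Finset.sum_range_succ] at hG
      have hnn : n - n = 0 := by omega
      rw [hnn, pow_zero] at hG
      -- hG : ∑ j ∈ range n, (j+2) r^(n-j) + ((n:ℝ)+2)*1 = r^(n+1) + (1-√2) n - √2
      have hsum : ∑ j ∈ Finset.range n, ((j : ℝ) + 2) * ((2 + Real.sqrt 2) ^ (n - j) * (2 - Real.sqrt 2))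
          = (2 - Real.sqrt 2) * ((2 + Real.sqrt 2) ^ (n + 1) + (1 - Real.sqrt 2) * n - Real.sqrt 2 - ((n : ℝ) + 2)) := by
        rw [show ((2 + Real.sqrt 2) ^ (n + 1) + (1 - Real.sqrt 2) * n - Real.sqrt 2 - ((n : ℝ) + 2))
          = ∑ j ∈ Finset.range n, ((j : ℝ) + 2) * (2 + Real.sqrt 2) ^ (n - j) by linarith, Finset.mul_sum]
        exact Finset.sum_congr rfl fun j _ => by ring
      rw [hsum] at hterm
      have hn0 : (0 : ℝ) ≤ (n : ℝ) := Nat.cast_nonneg n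
      have h32 : 2 * Real.sqrt 2 ≤ 3 := by nlinarith
      nlinarith [hcast, hterm, mul_nonneg (by nlinarith : (0:ℝ) ≤ 3 - 2 * Real.sqrt 2) hn0]
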